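/- A wiring F in the Stack semiring is cyclic if and only if the increasing part sat(F)↑ of its saturation or the decreasing part sat(F)↓ of its saturation is cyclic. -/

import Mathlib

/-!  Base definitions for the Stack semiring: unary flows ("stack operations")
`τ(x) ⊣ σ(x)` are modelled as pairs of lists of unary function symbols
(outermost symbol first).  The resolution product of two stack operations is
defined when one of the two sequences to be unified is a prefix of the other. -/

/-- A stack operation `τ(x) ⊣ σ(x)`: the first component is the head/left term
`τ(x)`, the second the body/right term `σ(x)`, each a sequence of unary
function symbols applied to the variable `x` (outermost first). -/
abbrev SOp := List ℕ × List ℕ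

/-- Resolution product of stack operations (`none` = undefined = 0).
`(τ ⊣ σ)(ρ ⊣ χ)` unifies `σ(x)` with `ρ(y)`. -/
def scomp (f g : SOp) : Option SOp :=
  if f.2 <+: g.1 then some (f.1 ++ g.1.drop f.2.length, g.2)
  else if g.1 <+: f.2 then some (f.1, g.2 ++ f.2.drop g.1.length)
  else none

/-- Height of a stack operation: max of the heights of its two terms. -/
def hOp (f : SOp) : ℕ := max f.1.length f.2.length

/-- A stack operation is a cycle iff its two terms are matchable, which for
unary terms `τ(x)`, `σ(y)` means one sequence is a prefix of the other. -/
def isCycleS (f : SOp) : Prop := f.1 <+: f.2 ∨ f.2 <+: f.1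

/-- `f` is increasing when `h(τ(x)) ≥ h(σ(x))`. -/
def incP (f : SOp) : Prop := f.2.length ≤ f.1.length

/-- `f` is decreasing when `h(τ(x)) ≤ h(σ(x))`. -/
def decP (f : SOp) : Prop := f.1.length ≤ f.2.length

instance : DecidablePred incP := fun f => inferInstanceAs (Decidable (_ ≤ _))
instance : DecidablePred decP := fun f => inferInstanceAs (Decidable (_ ≤ _))

/-- A wiring of the Stack semiring: a finite set (sum) of stack operations. -/
abbrev SWiring := Finset SOp

/-- Product of wirings: pointwise products of flows, keeping defined ones. -/
def smul (F G : SWiring) : SWiring :=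
  (F ×ˢ G).biUnion fun p => (scomp p.1 p.2).toFinset

/-- Powers of a wiring (`spow F 0` is the unit wiring `{x ⊣ x}`). -/
def spow (F : SWiring) : ℕ → SWiring
  | 0 => {(([] : List ℕ), ([] : List ℕ))}
  | n + 1 => smul (spow F n) F

/-- Nilpotency: some (positive) power is 0, i.e. the empty wiring. -/
def SNilpotent (F : SWiring) : Prop := ∃ n, 0 < n ∧ spow F n = ∅

/-- Cyclicity: some power contains a cycle. -/
def SCyclic (F : SWiring) : Prop := ∃ k, 0 < k ∧ ∃ f ∈ spow F k, isCycleS f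

/-- Increasing part of a wiring. -/
def incF (F : SWiring) : SWiring := F.filter incP

/-- Decreasing part of a wiring. -/
def decF (F : SWiring) : SWiring := F.filter decP

/-- The shortcut operation `short(F) = F + F↓·F↑`. -/
def short (F : SWiring) : SWiring := F ∪ smul (decF F) (incF F)

/-- Height of a wiring (0 for the empty wiring). -/
def wheightS (F : SWiring) : ℕ := F.sup hOp

/-- The function symbols occurring in a wiring. -/
def symbolsS (F : SWiring) : Finset ℕ :=
  F.biUnion fun f => f.1.toFinset ∪ f.2.toFinset

/-- Size of a wiring: total number of function symbol occurrences. -/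
def sizeS (F : SWiring) : ℕ := ∑ f ∈ F, (f.1.length + f.2.length)

/-- The saturation `sat(F) = Σₙ shortⁿ(F)`, least fixpoint of `short`
containing `F`. -/
def satSet (F : SWiring) : Set SOp := ⋃ n, (short^[n] F : Finset SOp)

/-- Powers of a set of stack operations. -/
def spowSet (A : Set SOp) : ℕ → Set SOp
  | 0 => {(([] : List ℕ), ([] : List ℕ))}
  | n + 1 => {h | ∃ f ∈ spowSet A n, ∃ g ∈ A, scomp f g = some h}

/-- Cyclicity for a set of stack operations. -/
def SetCyclic (A : Set SOp) : Prop :=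
  ∃ k, 0 < k ∧ ∃ f ∈ spowSet A k, isCycleS f

section CyclicSatProof

open List

/-- the identity stack operation -/
def sid : SOp := (([] : List ℕ), ([] : List ℕ))

lemma scomp_id_left (g : SOp) : scomp sid g = some g := by
  simp [scomp, sid]

lemma scomp_id_right (f : SOp) : scomp f sid = some f := by
  unfold scomp sid
  split_ifs with h1 h2
  · simp only [List.prefix_nil] at h1
    simp only [List.drop_nil, List.append_nil]
    exact congrArg some (Prod.ext rfl h1.symm)
  · simp
  · exact absurd (List.nil_prefix) h2

/-- semantics: action of a stack operation on a stack -/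
def act (f : SOp) (s : List ℕ) : Option (List ℕ) :=
  if f.2 <+: s then some (f.1 ++ s.drop f.2.length) else none

lemma act_body (f : SOp) : act f f.2 = some f.1 := by
  simp [act]

lemma act_isSome_prefix {f : SOp} {s t : List ℕ} (h : act f s = some t) : f.2 <+: s := by
  by_contra hc
  simp [act, hc] at h

lemma obind_assoc {α β γ : Type} (o : Option α) (k : α → Option β) (k' : β → Option γ) :
    (o.bind k).bind k' = o.bind (fun a => (k a).bind k') := by
  cases o <;> rfl

lemma obind_comm {α β γ : Type} (o₁ : Option α) (o₂ : Option β) (k : α → β → Option γ) :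
    o₁.bind (fun a => o₂.bind (fun b => k a b)) = o₂.bind (fun b => o₁.bind (fun a => k a b)) := by
  cases o₁ <;> cases o₂ <;> rfl

lemma act_scomp (f g : SOp) (s : List ℕ) :
    (act g s).bind (act f) = (scomp f g).bind (fun h => act h s) := by
  obtain ⟨f1, f2⟩ := f
  obtain ⟨g1, g2⟩ := g
  by_cases hs : g2 <+: s
  · obtain ⟨w, rfl⟩ := hs
    have hact : act (g1, g2) (g2 ++ w) = some (g1 ++ w) := by
      simp [act, List.prefix_append, List.drop_left]
    rw [hact, Option.bind_some]
    show act (f1, f2) (g1 ++ w) = (scomp (f1, f2) (g1, g2)).bind (fun h => act h (g2 ++ w))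
    unfold scomp
    dsimp only
    split_ifs with h1 h2
    · obtain ⟨d, rfl⟩ := h1
      rw [Option.bind_some]
      have hl : act (f1, f2) (f2 ++ d ++ w) = some (f1 ++ (d ++ w)) := by
        rw [List.append_assoc]
        simp [act, List.prefix_append, List.drop_left]
      have hr : act (f1 ++ (f2 ++ d).drop f2.length, g2) (g2 ++ w) = some (f1 ++ d ++ w) := by
        simp [act, List.prefix_append, List.drop_left]
      rw [hl, hr]
      simp [List.append_assoc]
    · obtain ⟨d, rfl⟩ := h2
      rw [Option.bind_some]
      by_cases hdw : d <+: w
      · obtain ⟨e, rfl⟩ := hdw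
        have hl : act (f1, g1 ++ d) (g1 ++ (d ++ e)) = some (f1 ++ e) := by
          have hpre : g1 ++ d <+: g1 ++ (d ++ e) := by
            rw [← List.append_assoc]; exact List.prefix_append _ _
          have hdrop : (g1 ++ (d ++ e)).drop (g1 ++ d).length = e := by
            rw [← List.append_assoc]; exact List.drop_left
          simp [act, hpre, hdrop]
        have hr : act (f1, g2 ++ (g1 ++ d).drop g1.length) (g2 ++ (d ++ e)) = some (f1 ++ e) := by
          rw [List.drop_left]
          have hpre : g2 ++ d <+: g2 ++ (d ++ e) := by
            rw [← List.append_assoc]; exact List.prefix_append _ _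
          have hdrop : (g2 ++ (d ++ e)).drop (g2 ++ d).length = e := by
            rw [← List.append_assoc]; exact List.drop_left
          simp [act, hpre, hdrop]
        rw [hl, hr]
      · have hl : act (f1, g1 ++ d) (g1 ++ w) = none := by
          have hnp : ¬(g1 ++ d <+: g1 ++ w) := by
            rw [List.prefix_append_right_inj]; exact hdw
          simp [act, hnp]
        have hr : act (f1, g2 ++ (g1 ++ d).drop g1.length) (g2 ++ w) = none := by
          rw [List.drop_left]
          have hnp : ¬(g2 ++ d <+: g2 ++ w) := by
            rw [List.prefix_append_right_inj]; exact hdw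
          simp [act, hnp]
        rw [hl, hr]
    · rw [Option.bind_none]
      have hnp : ¬(f2 <+: g1 ++ w) := by
        intro hcon
        rcases List.prefix_or_prefix_of_prefix hcon (List.prefix_append g1 w) with h | h
        · exact h1 h
        · exact h2 h
      simp [act, hnp]
  · have hact : act (g1, g2) s = none := by simp [act, hs]
    rw [hact, Option.bind_none]
    unfold scomp
    dsimp only
    split_ifs with h1 h2
    · rw [Option.bind_some]
      simp [act, hs]
    · rw [Option.bind_some]
      have hnp : ¬(g2 ++ f2.drop g1.length <+: s) :=
        fun hh => hs ((List.prefix_append g2 _).trans hh)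
      simp [act, hnp]
    · rfl

lemma opt_ext {o₁ o₂ : Option SOp}
    (h : ∀ s, o₁.bind (fun p => act p s) = o₂.bind (fun p => act p s)) : o₁ = o₂ := by
  match o₁, o₂ with
  | none, none => rfl
  | none, some q =>
    have hq := h q.2
    rw [Option.bind_none, Option.bind_some, act_body] at hq
    exact absurd hq (by simp)
  | some p, none =>
    have hp := h p.2
    rw [Option.bind_none, Option.bind_some, act_body] at hp
    exact absurd hp (by simp)
  | some p, some q =>
    have h1 := h p.2
    rw [Option.bind_some, Option.bind_some, act_body] at h1
    have h2 := h q.2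
    rw [Option.bind_some, Option.bind_some, act_body] at h2
    have hqp : q.2 <+: p.2 := act_isSome_prefix h1.symm
    have hpq : p.2 <+: q.2 := act_isSome_prefix h2
    have he : p.2 = q.2 := hpq.eq_of_length (hpq.length_le.antisymm hqp.length_le)
    have hb : act q p.2 = some q.1 := by rw [he, act_body]
    rw [hb] at h1
    have h1' : p.1 = q.1 := Option.some.inj h1
    exact congrArg some (Prod.ext h1' he)

lemma scomp_assoc (f g h : SOp) :
    (scomp f g).bind (fun x => scomp x h) = (scomp g h).bind (fun y => scomp f y) := by
  apply opt_ext
  intro s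
  rw [obind_assoc, obind_assoc]
  have e1 : ∀ x, (scomp x h).bind (fun p => act p s) = (act h s).bind (act x) :=
    fun x => (act_scomp x h s).symm
  have e2 : ∀ y, (scomp f y).bind (fun p => act p s) = (act y s).bind (act f) :=
    fun y => (act_scomp f y s).symm
  simp only [e1, e2]
  calc (scomp f g).bind (fun x => (act h s).bind (act x))
      = (act h s).bind (fun t => (scomp f g).bind (fun x => act x t)) := obind_comm _ _ _
    _ = (act h s).bind (fun t => (act g t).bind (act f)) := by
        simp only [← act_scomp]
    _ = ((act h s).bind (act g)).bind (act f) := (obind_assoc _ _ _).symm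
    _ = ((scomp g h).bind (fun p => act p s)).bind (act f) := by rw [act_scomp]
    _ = (scomp g h).bind (fun y => (act y s).bind (act f)) := obind_assoc _ _ _

/-! word products -/

def wstep (o : Option SOp) (g : SOp) : Option SOp := o.bind (fun a => scomp a g)

def wprod (L : List SOp) : Option SOp := L.foldl wstep (some sid)

lemma wprod_nil : wprod [] = some sid := rfl

lemma wprod_single (f : SOp) : wprod [f] = some f := by
  simp [wprod, wstep, scomp_id_left]

lemma foldl_wstep (v : List SOp) : ∀ o : Option SOp,
    v.foldl wstep o = o.bind (fun a => (wprod v).bind (fun b => scomp a b)) := by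
  induction v with
  | nil =>
    intro o
    cases o <;> simp [wprod_nil, scomp_id_right]
  | cons g v ihv =>
    intro o
    rw [List.foldl_cons, ihv]
    have hgv : wprod (g :: v) = (wprod v).bind (fun b => scomp g b) := by
      show List.foldl wstep (some sid) (g :: v) = _
      rw [List.foldl_cons, ihv]
      have hg : wstep (some sid) g = some g := by simp [wstep, scomp_id_left]
      rw [hg, Option.bind_some]
    rw [hgv]
    show (o.bind (fun a => scomp a g)).bind (fun a => (wprod v).bind (fun b => scomp a b)) = _
    rw [obind_assoc]
    refine congrArg (Option.bind o) (funext fun a => ?_)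
    rw [obind_assoc]
    calc (scomp a g).bind (fun x => (wprod v).bind (fun b => scomp x b))
        = (wprod v).bind (fun b => (scomp a g).bind (fun x => scomp x b)) := obind_comm _ _ _
      _ = (wprod v).bind (fun b => (scomp g b).bind (fun y => scomp a y)) := by
          simp only [scomp_assoc]

lemma wprod_append (u v : List SOp) :
    wprod (u ++ v) = (wprod u).bind (fun a => (wprod v).bind (fun b => scomp a b)) := by
  rw [wprod, List.foldl_append]
  exact foldl_wstep v (wprod u)

lemma wprod_append_some {u v : List SOp} {f : SOp} (h : wprod (u ++ v) = some f) :
    ∃ a b, wprod u = some a ∧ wprod v = some b ∧ scomp a b = some f := by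
  rw [wprod_append] at h
  rcases Option.bind_eq_some_iff.mp h with ⟨a, ha, h2⟩
  rcases Option.bind_eq_some_iff.mp h2 with ⟨b, hb, h3⟩
  exact ⟨a, b, ha, hb, h3⟩

lemma wprod_append_of {u v : List SOp} {a b f : SOp}
    (ha : wprod u = some a) (hb : wprod v = some b) (hab : scomp a b = some f) :
    wprod (u ++ v) = some f := by
  rw [wprod_append, ha, Option.bind_some, hb, Option.bind_some, hab]

end CyclicSatProof
section CyclicSatProof2

open List

lemma mem_smul {F G : SWiring} {h : SOp} :
    h ∈ smul F G ↔ ∃ f ∈ F, ∃ g ∈ G, scomp f g = some h := by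
  unfold smul
  rw [Finset.mem_biUnion]
  constructor
  · rintro ⟨⟨f, g⟩, hp, hh⟩
    rw [Finset.mem_product] at hp
    rw [Option.mem_toFinset, Option.mem_def] at hh
    exact ⟨f, hp.1, g, hp.2, hh⟩
  · rintro ⟨f, hf, g, hg, hh⟩
    refine ⟨(f, g), Finset.mem_product.mpr ⟨hf, hg⟩, ?_⟩
    rw [Option.mem_toFinset, Option.mem_def]
    exact hh

lemma mem_spow {F : SWiring} : ∀ {n : ℕ} {f : SOp},
    f ∈ spow F n ↔ ∃ L : List SOp, L.length = n ∧ (∀ x ∈ L, x ∈ F) ∧ wprod L = some f := by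
  intro n
  induction n with
  | zero =>
    intro f
    constructor
    · intro hf
      rw [spow, Finset.mem_singleton] at hf
      exact ⟨[], rfl, by simp, by rw [wprod_nil, hf]; rfl⟩
    · rintro ⟨L, hlen, _, hw⟩
      rw [List.length_eq_zero_iff] at hlen
      subst hlen
      rw [wprod_nil] at hw
      rw [spow, Finset.mem_singleton]
      exact (Option.some.inj hw).symm
  | succ n ih =>
    intro f
    rw [spow, mem_smul]
    constructor
    · rintro ⟨a, ha, g, hg, hag⟩
      obtain ⟨L, hlen, hm, hw⟩ := ih.mp ha
      refine ⟨L ++ [g], by simp [hlen], ?_, wprod_append_of hw (wprod_single g) hag⟩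
      intro x hx
      rcases List.mem_append.mp hx with h | h
      · exact hm x h
      · rw [List.mem_singleton] at h
        subst h
        exact hg
    · rintro ⟨L, hlen, hm, hw⟩
      have hne : L ≠ [] := by
        intro h0
        rw [h0] at hlen
        simp at hlen
      rcases List.eq_nil_or_concat' L with rfl | ⟨M, g, rfl⟩
      · exact absurd rfl hne
      · obtain ⟨a, b, ha, hb, hab⟩ := wprod_append_some hw
        rw [wprod_single] at hb
        have hb' := Option.some.inj hb
        subst hb'
        have hMlen : M.length = n := by
          simp at hlen
          omega
        refine ⟨a, ih.mpr ⟨M, hMlen, ?_, ha⟩, g, hm g (by simp), hab⟩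
        intro x hx
        exact hm x (by simp [hx])

lemma mem_spowSet {A : Set SOp} : ∀ {n : ℕ} {f : SOp},
    f ∈ spowSet A n ↔ ∃ L : List SOp, L.length = n ∧ (∀ x ∈ L, x ∈ A) ∧ wprod L = some f := by
  intro n
  induction n with
  | zero =>
    intro f
    constructor
    · intro hf
      rw [spowSet, Set.mem_singleton_iff] at hf
      exact ⟨[], rfl, by simp, by rw [wprod_nil, hf]; rfl⟩
    · rintro ⟨L, hlen, _, hw⟩
      rw [List.length_eq_zero_iff] at hlen
      subst hlen
      rw [wprod_nil] at hw
      rw [spowSet, Set.mem_singleton_iff]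
      exact (Option.some.inj hw).symm
  | succ n ih =>
    intro f
    show (∃ a ∈ spowSet A n, ∃ g ∈ A, scomp a g = some f) ↔ _
    constructor
    · rintro ⟨a, ha, g, hg, hag⟩
      obtain ⟨L, hlen, hm, hw⟩ := ih.mp ha
      refine ⟨L ++ [g], by simp [hlen], ?_, wprod_append_of hw (wprod_single g) hag⟩
      intro x hx
      rcases List.mem_append.mp hx with h | h
      · exact hm x h
      · rw [List.mem_singleton] at h
        subst h
        exact hg
    · rintro ⟨L, hlen, hm, hw⟩
      have hne : L ≠ [] := by
        intro h0
        rw [h0] at hlen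
        simp at hlen
      rcases List.eq_nil_or_concat' L with rfl | ⟨M, g, rfl⟩
      · exact absurd rfl hne
      · obtain ⟨a, b, ha, hb, hab⟩ := wprod_append_some hw
        rw [wprod_single] at hb
        have hb' := Option.some.inj hb
        subst hb'
        have hMlen : M.length = n := by
          simp at hlen
          omega
        refine ⟨a, ih.mpr ⟨M, hMlen, ?_, ha⟩, g, hm g (by simp), hab⟩
        intro x hx
        exact hm x (by simp [hx])

lemma scyclic_iff {F : SWiring} :
    SCyclic F ↔ ∃ L : List SOp, L ≠ [] ∧ (∀ x ∈ L, x ∈ F) ∧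
      ∃ f, wprod L = some f ∧ isCycleS f := by
  constructor
  · rintro ⟨k, hk, f, hf, hc⟩
    obtain ⟨L, hlen, hm, hw⟩ := mem_spow.mp hf
    refine ⟨L, ?_, hm, f, hw, hc⟩
    intro h0
    rw [h0] at hlen
    simp at hlen
    omega
  · rintro ⟨L, hne, hm, f, hw, hc⟩
    exact ⟨L.length, List.length_pos_iff.mpr hne, f, mem_spow.mpr ⟨L, rfl, hm, hw⟩, hc⟩

lemma setCyclic_of_word {A : Set SOp} {L : List SOp} (hne : L ≠ [])
    (hm : ∀ x ∈ L, x ∈ A) {f : SOp} (hw : wprod L = some f) (hc : isCycleS f) :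
    SetCyclic A :=
  ⟨L.length, List.length_pos_iff.mpr hne, f, mem_spowSet.mpr ⟨L, rfl, hm, hw⟩, hc⟩

/-! saturation facts -/

lemma mem_satSet {F : SWiring} {f : SOp} :
    f ∈ satSet F ↔ ∃ n, f ∈ short^[n] F := by
  simp [satSet, Set.mem_iUnion]

lemma subset_short (G : SWiring) : G ⊆ short G := Finset.subset_union_left

lemma short_iter_subset (F : SWiring) {m n : ℕ} (h : m ≤ n) :
    (short^[m] F : SWiring) ⊆ short^[n] F := by
  induction h with
  | refl => exact subset_rfl
  | step _ ih =>
    rw [Function.iterate_succ_apply']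
    exact ih.trans (subset_short _)

lemma mem_satSet_of_mem {F : SWiring} {f : SOp} (h : f ∈ F) : f ∈ satSet F :=
  mem_satSet.mpr ⟨0, by simpa using h⟩

lemma satSet_short {F : SWiring} {d i z : SOp} (hd : d ∈ satSet F) (hi : i ∈ satSet F)
    (hdd : decP d) (hii : incP i) (hz : scomp d i = some z) : z ∈ satSet F := by
  rw [mem_satSet] at hd hi ⊢
  obtain ⟨m, hm⟩ := hd
  obtain ⟨n, hn⟩ := hi
  refine ⟨max m n + 1, ?_⟩
  rw [Function.iterate_succ_apply']
  apply Finset.mem_union_right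
  exact mem_smul.mpr ⟨d,
    Finset.mem_filter.mpr ⟨short_iter_subset F (le_max_left m n) hm, hdd⟩, i,
    Finset.mem_filter.mpr ⟨short_iter_subset F (le_max_right m n) hn, hii⟩, hz⟩

lemma sat_word_aux (F : SWiring) : ∀ (n : ℕ) (x : SOp), x ∈ short^[n] F →
    ∃ M : List SOp, M ≠ [] ∧ (∀ y ∈ M, y ∈ F) ∧ wprod M = some x := by
  intro n
  induction n with
  | zero =>
    intro x hx
    simp only [Function.iterate_zero, id_eq] at hx
    refine ⟨[x], by simp, ?_, wprod_single x⟩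
    intro y hy
    rw [List.mem_singleton] at hy
    subst hy
    exact hx
  | succ n ih =>
    intro x hx
    rw [Function.iterate_succ_apply'] at hx
    rcases Finset.mem_union.mp hx with h | h
    · exact ih x h
    · obtain ⟨dd, hdd, ii, hii, hsc⟩ := mem_smul.mp h
      have hd' : dd ∈ short^[n] F := (Finset.mem_filter.mp hdd).1
      have hi' : ii ∈ short^[n] F := (Finset.mem_filter.mp hii).1
      obtain ⟨Md, hMdne, hMdm, hMdw⟩ := ih dd hd'
      obtain ⟨Mi, hMine, hMim, hMiw⟩ := ih ii hi'
      refine ⟨Md ++ Mi, by simp [hMdne], ?_, wprod_append_of hMdw hMiw hsc⟩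
      intro y hy
      rcases List.mem_append.mp hy with h' | h'
      · exact hMdm y h'
      · exact hMim y h'

lemma sat_word {F : SWiring} {x : SOp} (hx : x ∈ satSet F) :
    ∃ M : List SOp, M ≠ [] ∧ (∀ y ∈ M, y ∈ F) ∧ wprod M = some x := by
  obtain ⟨n, hn⟩ := mem_satSet.mp hx
  exact sat_word_aux F n x hn

lemma flatten {F : SWiring} : ∀ (L : List SOp), (∀ x ∈ L, x ∈ satSet F) →
    ∀ f : SOp, wprod L = some f →
    ∃ M : List SOp, L.length ≤ M.length ∧ (∀ y ∈ M, y ∈ F) ∧ wprod M = some f := by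
  intro L
  induction L with
  | nil =>
    intro _ f hf
    exact ⟨[], le_rfl, by simp, hf⟩
  | cons x L ih =>
    intro hm f hf
    have hx : x ∈ satSet F := hm x (by simp)
    obtain ⟨a, b, ha, hb, hab⟩ := wprod_append_some (u := [x]) (v := L) (by simpa using hf)
    rw [wprod_single] at ha
    have ha' := Option.some.inj ha
    subst ha'
    obtain ⟨Mx, hMxne, hMxm, hMxw⟩ := sat_word hx
    obtain ⟨ML, hMLlen, hMLm, hMLw⟩ := ih (fun y hy => hm y (by simp [hy])) b hb
    refine ⟨Mx ++ ML, ?_, ?_, wprod_append_of hMxw hMLw hab⟩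
    · have : 1 ≤ Mx.length := List.length_pos_iff.mpr hMxne
      simp only [List.length_append, List.length_cons]
      omega
    · intro y hy
      rcases List.mem_append.mp hy with h' | h'
      · exact hMxm y h'
      · exact hMLm y h'

end CyclicSatProof2
section CyclicSatProof3

open List

/-- Rotation lemma for a pair of stack operations. -/
lemma rot_pair {a b c : SOp} (h : scomp a b = some c) (hc : isCycleS c) :
    ∃ c', scomp b a = some c' ∧ isCycleS c' := by
  obtain ⟨a1, a2⟩ := a
  obtain ⟨b1, b2⟩ := b
  unfold scomp at h ⊢
  dsimp only at h ⊢
  split_ifs at h with h1 h2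
  · -- a2 <+: b1
    obtain ⟨d, rfl⟩ := h1
    have hcv := Option.some.inj h
    subst hcv
    unfold isCycleS at hc
    rw [List.drop_left] at hc
    dsimp only at hc
    split_ifs with g1 g2
    · -- b2 <+: a1 : result ((a2 ++ d) ++ a1.drop b2.length, a2), always a cycle
      refine ⟨_, rfl, Or.inr ?_⟩
      exact ⟨d ++ a1.drop b2.length, by rw [← List.append_assoc]⟩
    · -- a1 <+: b2 : result (a2 ++ d, a2 ++ b2.drop a1.length)
      rcases hc with hcy | hcy
      · -- a1 ++ d <+: b2
        obtain ⟨e, he⟩ := hcy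
        refine ⟨_, rfl, Or.inl ?_⟩
        rw [List.prefix_append_right_inj]
        have : b2.drop a1.length = d ++ e := by
          rw [← he, List.append_assoc, List.drop_left]
        rw [this]
        exact List.prefix_append d e
      · -- b2 <+: a1 ++ d, with a1 <+: b2
        obtain ⟨e, he⟩ := g2
        have hed : e <+: d := by
          rw [← he] at hcy
          exact (List.prefix_append_right_inj a1).mp hcy
        refine ⟨_, rfl, Or.inr ?_⟩
        rw [List.prefix_append_right_inj]
        have : b2.drop a1.length = e := by rw [← he, List.drop_left]
        rw [this]
        exact hed
    · -- neither: contradiction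
      exfalso
      rcases hc with hcy | hcy
      · exact g2 ((List.prefix_append a1 d).trans hcy)
      · rcases List.prefix_or_prefix_of_prefix hcy (List.prefix_append a1 d) with h' | h'
        · exact g1 h'
        · exact g2 h'
  · -- b1 <+: a2
    obtain ⟨d, rfl⟩ := h2
    have hcv := Option.some.inj h
    subst hcv
    unfold isCycleS at hc
    rw [List.drop_left] at hc
    dsimp only at hc
    split_ifs with g1 g2
    · -- b2 <+: a1 : result (b1 ++ a1.drop b2.length, b1 ++ d)
      obtain ⟨e, he⟩ := g1
      have hdrop : a1.drop b2.length = e := by rw [← he, List.drop_left]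
      rcases hc with hcy | hcy
      · -- a1 <+: b2 ++ d : e <+: d
        have hed : e <+: d := by
          rw [← he] at hcy
          exact (List.prefix_append_right_inj b2).mp hcy
        refine ⟨_, rfl, Or.inl ?_⟩
        rw [hdrop, List.prefix_append_right_inj]
        exact hed
      · -- b2 ++ d <+: a1 : d <+: e
        have hde : d <+: e := by
          rw [← he] at hcy
          exact (List.prefix_append_right_inj b2).mp hcy
        refine ⟨_, rfl, Or.inr ?_⟩
        rw [hdrop, List.prefix_append_right_inj]
        exact hde
    · -- a1 <+: b2 : result (b1, (b1 ++ d) ++ b2.drop a1.length), always a cycle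
      refine ⟨_, rfl, Or.inl ?_⟩
      exact ⟨d ++ b2.drop a1.length, by rw [← List.append_assoc]⟩
    · -- neither: contradiction
      exfalso
      rcases hc with hcy | hcy
      · rcases List.prefix_or_prefix_of_prefix hcy (List.prefix_append b2 d) with h' | h'
        · exact g2 h'
        · exact g1 h'
      · exact g1 ((List.prefix_append b2 d).trans hcy)

lemma rot_word (u v : List SOp) (f : SOp) (h : wprod (u ++ v) = some f) (hc : isCycleS f) :
    ∃ g, wprod (v ++ u) = some g ∧ isCycleS g := by
  obtain ⟨a, b, ha, hb, hab⟩ := wprod_append_some h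
  obtain ⟨c', hc', hcy⟩ := rot_pair hab hc
  exact ⟨c', wprod_append_of hb ha hc', hcy⟩

lemma first_split {p : SOp → Prop} [DecidablePred p] : ∀ {L : List SOp}, (∃ x ∈ L, p x) →
    ∃ u a v, L = u ++ a :: v ∧ p a ∧ ∀ x ∈ u, ¬p x := by
  intro L
  induction L with
  | nil =>
    rintro ⟨x, hx, -⟩
    simp at hx
  | cons y L ih =>
    intro h
    by_cases hy : p y
    · exact ⟨[], y, L, rfl, hy, by simp⟩
    · have h' : ∃ x ∈ L, p x := by
        rcases h with ⟨x, hx, hpx⟩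
        rcases List.mem_cons.mp hx with rfl | hx'
        · exact absurd hpx hy
        · exact ⟨x, hx', hpx⟩
      obtain ⟨u, a, v, rfl, hpa, hu⟩ := ih h'
      refine ⟨y :: u, a, v, rfl, hpa, ?_⟩
      intro x hx
      rcases List.mem_cons.mp hx with rfl | hx'
      · exact hy
      · exact hu x hx'

lemma reduce_step {F : SWiring} {p s : SOp} {t : List SOp} {f : SOp}
    (hp : p ∈ satSet F) (hs : s ∈ satSet F) (hpd : decP p) (hsi : incP s)
    (hw : wprod (p :: s :: t) = some f) :
    ∃ q, q ∈ satSet F ∧ wprod (q :: t) = some f := by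
  have hsplit : p :: s :: t = [p, s] ++ t := rfl
  rw [hsplit] at hw
  obtain ⟨a, b, ha, hb, hab⟩ := wprod_append_some hw
  have hps : wprod [p, s] = scomp p s := by
    simp [wprod, wstep, scomp_id_left]
  rw [hps] at ha
  refine ⟨a, satSet_short hp hs hpd hsi ha, ?_⟩
  have hsplit2 : a :: t = [a] ++ t := rfl
  rw [hsplit2]
  exact wprod_append_of (wprod_single a) hb hab

lemma main_lemma (F : SWiring) : ∀ (k : ℕ) (L : List SOp), L.length = k → L ≠ [] →
    (∀ x ∈ L, x ∈ satSet F) → ∀ f : SOp, wprod L = some f → isCycleS f →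
    SetCyclic {f ∈ satSet F | incP f} ∨ SetCyclic {f ∈ satSet F | decP f} := by
  intro k
  induction k using Nat.strong_induction_on with
  | _ k ihk =>
  intro L hlen hne hmem f hw hc
  by_cases hI : ∀ x ∈ L, incP x
  · exact Or.inl (setCyclic_of_word hne (fun x hx => ⟨hmem x hx, hI x hx⟩) hw hc)
  by_cases hD : ∀ x ∈ L, decP x
  · exact Or.inr (setCyclic_of_word hne (fun x hx => ⟨hmem x hx, hD x hx⟩) hw hc)
  -- mixed case
  push_neg at hI hD
  obtain ⟨adec, haL, hana⟩ := hI
  have hadec : decP adec := le_of_not_ge hana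
  obtain ⟨u, v, hLuv⟩ := List.append_of_mem haL
  rw [hLuv] at hw
  obtain ⟨f₁, hw₁, hc₁⟩ := rot_word u (adec :: v) f hw hc
  have hmem₁ : ∀ x ∈ (adec :: v) ++ u, x ∈ satSet F := by
    intro x hx
    apply hmem
    rw [hLuv]
    rw [List.mem_append] at hx ⊢
    rcases hx with h' | h'
    · exact Or.inr h'
    · exact Or.inl h'
  have hlen₁ : ((adec :: v) ++ u).length = k := by
    rw [← hlen, hLuv]
    simp
    omega
  -- find the first strictly increasing element of v ++ u
  obtain ⟨binc, hbL, hbnb⟩ := hD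
  have hbmem : binc ∈ v ++ u := by
    have hb₁ : binc ∈ (adec :: v) ++ u := by
      rw [hLuv] at hbL
      rw [List.mem_append] at hbL ⊢
      rw [List.mem_cons]
      rcases hbL with h' | h'
      · exact Or.inr h'
      · rw [List.mem_cons] at h'
        rcases h' with rfl | h''
        · exact Or.inl (Or.inl rfl)
        · exact Or.inl (Or.inr h'')
    rw [List.cons_append, List.mem_cons] at hb₁
    rcases hb₁ with rfl | h'
    · exact absurd hadec hbnb
    · exact h'
  obtain ⟨d, s, e, hrest, hsn, hdall⟩ :=
    first_split (p := fun x => ¬decP x) ⟨binc, hbmem, hbnb⟩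
  have hsinc : incP s := le_of_not_ge hsn
  have hddec : ∀ x ∈ d, decP x := fun x hx => of_not_not (hdall x hx)
  rcases List.eq_nil_or_concat' d with rfl | ⟨d', pp, rfl⟩
  · -- L₁ = adec :: s :: e directly
    rw [List.nil_append] at hrest
    have hL₁ : (adec :: v) ++ u = adec :: s :: e := by rw [List.cons_append, hrest]
    rw [hL₁] at hw₁ hmem₁ hlen₁
    obtain ⟨q, hq, hwq⟩ := reduce_step (hmem₁ adec (by simp)) (hmem₁ s (by simp))
      hadec hsinc hw₁
    have hlq : (q :: e).length < k := by
      simp at hlen₁ ⊢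
      omega
    refine ihk (q :: e).length hlq (q :: e) rfl (by simp) ?_ f₁ hwq hc₁
    intro x hx
    rcases List.mem_cons.mp hx with rfl | hx'
    · exact hq
    · exact hmem₁ x (by simp [hx'])
  · -- L₁ = (adec :: d') ++ (pp :: s :: e); rotate once more
    have hppdec : decP pp := hddec pp (by simp)
    have hL₁ : (adec :: v) ++ u = (adec :: d') ++ (pp :: s :: e) := by
      rw [List.cons_append, hrest]
      simp [List.append_assoc]
    rw [hL₁] at hw₁ hmem₁ hlen₁
    obtain ⟨f₂, hw₂, hc₂⟩ := rot_word (adec :: d') (pp :: s :: e) f₁ hw₁ hc₁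
    have hmem₂ : ∀ x ∈ (pp :: s :: e) ++ (adec :: d'), x ∈ satSet F := by
      intro x hx
      apply hmem₁
      rw [List.mem_append] at hx ⊢
      tauto
    obtain ⟨q, hq, hwq⟩ := reduce_step (hmem₂ pp (by simp)) (hmem₂ s (by simp))
      hppdec hsinc (by simpa using hw₂)
    have hlq : (q :: (e ++ (adec :: d'))).length < k := by
      simp at hlen₁ ⊢
      omega
    refine ihk _ hlq (q :: (e ++ (adec :: d'))) rfl (by simp) ?_ f₂ hwq hc₂
    intro x hx
    rcases List.mem_cons.mp hx with rfl | hx'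
    · exact hq
    · apply hmem₂
      simp only [List.mem_cons, List.mem_append, List.cons_append] at hx' ⊢
      tauto

end CyclicSatProof3
/-- cyclicity and saturation: `F` is cyclic iff the increasing
part or the decreasing part of its saturation is cyclic. -/
theorem cyclic_iff_saturation (F : SWiring) :
    SCyclic F ↔
      SetCyclic {f ∈ satSet F | incP f} ∨ SetCyclic {f ∈ satSet F | decP f} := by
  constructor
  · intro hcyc
    obtain ⟨L, hne, hm, f, hw, hc⟩ := scyclic_iff.mp hcyc
    exact main_lemma F L.length L rfl hne (fun x hx => mem_satSet_of_mem (hm x hx)) f hw hc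
  · rintro (h | h) <;>
    · obtain ⟨k, hk, f, hf, hc⟩ := h
      obtain ⟨L, hlen, hm, hw⟩ := mem_spowSet.mp hf
      have hm' : ∀ x ∈ L, x ∈ satSet F := fun x hx => (hm x hx).1
      obtain ⟨M, hMlen, hMm, hMw⟩ := flatten L hm' f hw
      refine scyclic_iff.mpr ⟨M, ?_, hMm, f, hMw, hc⟩
      intro h0
      rw [h0] at hMlen
      simp only [List.length_nil, Nat.le_zero] at hMlen
      omega
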